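/- Let Z be the n×n nilpotent matrix which is a direct sum of nilpotent Jordan blocks of sizes ν₁ ≥ … ≥ ν_s (with ∑νᵢ = n), Z acting as the down-shift within each block scaled appropriately so that (1 − t⁻¹Z) is block diagonal with blocks Zᵢ = I − t⁻¹Nᵢ (Nᵢ the νᵢ×νᵢ Jordan block). Then there exist upper triangular matrices b, c in SL_n(k[t]) with b mod t and c mod t upper triangular over k, such that b(1 − t⁻¹Z)c is a generalized permutation matrix whose nonzero entries are t^{νᵢ−1} in position (block-bottom, block-top) and −t⁻¹ superdiagonal entries within each block. -/

import Mathlib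

open Finset Matrix LaurentPolynomial

/-- Let Z be the nilpotent matrix which is the direct sum of Jordan
blocks of sizes ν₁ ≥ … ≥ ν_s (∑νᵢ = n), indexed by the sigma type Σ i, Fin (νᵢ).
Then there exist matrices b, c over k[t] of determinant 1, which are upper triangular
modulo t (i.e. lie in the Iwahori subgroup ℬ), such that b·(1 − t⁻¹Z)·c is the
generalized permutation matrix ϖ with entries t^{νᵢ−1} at (block-bottom, block-top)
and −t⁻¹ on the superdiagonal within each block. -/
theorem one_sub_tinv_Z_bruhat_cell (K : Type*) [Field K] (n s : ℕ)
    (ν : Fin s → ℕ) (hpos : ∀ i, 0 < ν i) (hant : Antitone ν) (hsum : ∑ i, ν i = n)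
    (Z : Matrix (Σ i : Fin s, Fin (ν i)) (Σ i : Fin s, Fin (ν i)) K)
    (hZ : ∀ p q : Σ i : Fin s, Fin (ν i),
      Z p q = if p.1 = q.1 ∧ (p.2 : ℕ) + 1 = (q.2 : ℕ) then 1 else 0)
    (d : ℕ → ℕ)
    (hd : ∀ k : ℕ, d k = ∑ j ∈ Finset.univ.filter (fun j : Fin s => (j : ℕ) < k), ν j) :
    ∃ b c : Matrix (Σ i : Fin s, Fin (ν i)) (Σ i : Fin s, Fin (ν i)) (Polynomial K),
      b.det = 1 ∧ c.det = 1 ∧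
      (∀ p q : Σ i : Fin s, Fin (ν i),
        d q.1 + (q.2 : ℕ) < d p.1 + (p.2 : ℕ) → ((b p q).eval 0 = 0)) ∧
      (∀ p q : Σ i : Fin s, Fin (ν i),
        d q.1 + (q.2 : ℕ) < d p.1 + (p.2 : ℕ) → ((c p q).eval 0 = 0)) ∧
      (b.map (Polynomial.toLaurent))
          * ((1 : Matrix _ _ (LaurentPolynomial K))
              - (T (-1) : LaurentPolynomial K) • Z.map (algebraMap K (LaurentPolynomial K)))
          * (c.map (Polynomial.toLaurent))
        = Matrix.of (fun p q : Σ i : Fin s, Fin (ν i) =>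
            if p.1 = q.1 then
              (if (p.2 : ℕ) = ν p.1 - 1 ∧ (q.2 : ℕ) = 0
                then (T ((ν p.1 : ℤ) - 1) : LaurentPolynomial K) else 0)
              + (if (q.2 : ℕ) = (p.2 : ℕ) + 1
                then -(T (-1) : LaurentPolynomial K) else 0)
            else 0) := by
  classical
  -- key inequality on `d`
  have key : ∀ i i' : Fin s, i < i' → d i + ν i ≤ d i' := by
    intro i i' h
    rw [hd, hd]
    have hnot : i ∉ univ.filter (fun j : Fin s => (j : ℕ) < (i : ℕ)) := by simp
    have hii : (i : ℕ) < (i' : ℕ) := h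
    have hsub : insert i (univ.filter (fun j : Fin s => (j : ℕ) < (i : ℕ)))
        ⊆ univ.filter (fun j : Fin s => (j : ℕ) < (i' : ℕ)) := by
      intro j hj
      simp only [mem_insert, mem_filter, mem_univ, true_and] at hj ⊢
      rcases hj with rfl | h2 <;> omega
    have := Finset.sum_le_sum_of_subset (f := ν) hsub
    rw [Finset.sum_insert hnot] at this
    omega
  have flt : ∀ p q : (Σ i : Fin s, Fin (ν i)), p.1 < q.1 →
      d p.1 + (p.2 : ℕ) < d q.1 + (q.2 : ℕ) := by
    intro p q h
    have h1 := key p.1 q.1 h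
    have h2 : (p.2 : ℕ) < ν p.1 := p.2.isLt
    omega
  have sigeq : ∀ {i : Fin s} (x : Fin (ν i)) (j : (Σ i : Fin s, Fin (ν i))),
      j.1 = i → (j.2 : ℕ) = (x : ℕ) → j = ⟨i, x⟩ := by
    rintro i x ⟨ji, jx⟩ h1 h2
    dsimp only at h1 h2
    subst h1
    exact congrArg (Sigma.mk ji) (Fin.ext h2)
  have finj : Function.Injective
      (fun p : (Σ i : Fin s, Fin (ν i)) => d p.1 + (p.2 : ℕ)) := by
    intro p q hfe
    simp only at hfe
    rcases lt_trichotomy p.1 q.1 with h | h | h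
    · exact absurd (flt p q h) (by omega)
    · exact (sigeq q.2 p h
        (by rw [congrArg (fun i : Fin s => d i) h] at hfe; omega)).trans (Sigma.eta q)
    · exact absurd (flt q p h) (by omega)
  have detone : ∀ M : Matrix (Σ i : Fin s, Fin (ν i)) (Σ i : Fin s, Fin (ν i)) (Polynomial K),
      (∀ p q : (Σ i : Fin s, Fin (ν i)),
        d p.1 + (p.2 : ℕ) < d q.1 + (q.2 : ℕ) → M p q = 0) →
      (∀ p, M p p = 1) → M.det = 1 := by
    intro M h0 h1
    have hbt : M.BlockTriangular
        (fun p : (Σ i : Fin s, Fin (ν i)) => -((d p.1 + (p.2 : ℕ) : ℕ) : ℤ)) := by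
      intro p q hlt
      dsimp only at hlt
      exact h0 p q (by omega)
    rw [hbt.det]
    apply Finset.prod_eq_one
    intro a ha
    obtain ⟨p₀, -, hp₀⟩ := Finset.mem_image.mp ha
    haveI : Unique {p : (Σ i : Fin s, Fin (ν i)) //
        -((d p.1 + (p.2 : ℕ) : ℕ) : ℤ) = a} :=
      ⟨⟨⟨p₀, hp₀⟩⟩, by
        rintro ⟨x, hx⟩
        apply Subtype.ext
        apply finj
        show d x.1 + (x.2 : ℕ) = d p₀.1 + (p₀.2 : ℕ)
        omega⟩
    rw [Matrix.det_unique]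
    simp only [Matrix.toSquareBlock_def, Matrix.of_apply]
    exact h1 _
  set b : Matrix (Σ i : Fin s, Fin (ν i)) (Σ i : Fin s, Fin (ν i)) (Polynomial K) :=
    Matrix.of (fun p q => if p.1 = q.1 ∧ (q.2 : ℕ) ≤ (p.2 : ℕ)
      then Polynomial.X ^ ((p.2 : ℕ) - (q.2 : ℕ)) else 0) with hbdef
  set c : Matrix (Σ i : Fin s, Fin (ν i)) (Σ i : Fin s, Fin (ν i)) (Polynomial K) :=
    Matrix.of (fun p q => if p.1 = q.1 ∧ (q.2 : ℕ) = 0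
      then Polynomial.X ^ ((p.2 : ℕ)) else if p = q then 1 else 0) with hcdef
  have hb : ∀ p q, b p q = if p.1 = q.1 ∧ (q.2 : ℕ) ≤ (p.2 : ℕ)
      then Polynomial.X ^ ((p.2 : ℕ) - (q.2 : ℕ)) else 0 := fun p q => rfl
  have hc : ∀ p q, c p q = if p.1 = q.1 ∧ (q.2 : ℕ) = 0
      then Polynomial.X ^ ((p.2 : ℕ)) else if p = q then 1 else 0 := fun p q => rfl
  refine ⟨b, c, ?_, ?_, ?_, ?_, ?_⟩
  · refine detone b (fun p q hlt => ?_) (fun p => ?_)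
    · rw [hb, if_neg]
      rintro ⟨h1, h2⟩
      rw [congrArg (fun i : Fin s => d i) h1] at hlt
      omega
    · rw [hb, if_pos ⟨rfl, le_refl _⟩, Nat.sub_self, pow_zero]
  · refine detone c (fun p q hlt => ?_) (fun p => ?_)
    · rw [hc, if_neg, if_neg]
      · rintro rfl; omega
      · rintro ⟨h1, h2⟩
        rw [congrArg (fun i : Fin s => d i) h1] at hlt
        omega
    · rw [hc]
      by_cases h0 : (p.2 : ℕ) = 0
      · rw [if_pos ⟨rfl, h0⟩, h0, pow_zero]
      · rw [if_neg (by tauto), if_pos rfl]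
  · intro p q hpq
    rw [hb]
    by_cases h1 : p.1 = q.1 ∧ (q.2 : ℕ) ≤ (p.2 : ℕ)
    · rw [if_pos h1]
      have hdq : d p.1 = d q.1 := congrArg (fun i : Fin s => d i) h1.1
      have : (p.2 : ℕ) - (q.2 : ℕ) ≠ 0 := by omega
      simp [this]
    · rw [if_neg h1]; simp
  · intro p q hpq
    rw [hc]
    by_cases h1 : p.1 = q.1 ∧ (q.2 : ℕ) = 0
    · rw [if_pos h1]
      have hdq : d p.1 = d q.1 := congrArg (fun i : Fin s => d i) h1.1
      have : (p.2 : ℕ) ≠ 0 := by omega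
      simp [this]
    · rw [if_neg h1, if_neg (by rintro rfl; omega)]
      simp
  · -- the main computation
    have hAe : ∀ r j : (Σ i : Fin s, Fin (ν i)),
        ((1 - (T (-1) : LaurentPolynomial K) • Z.map (algebraMap K (LaurentPolynomial K)) :
            Matrix (Σ i : Fin s, Fin (ν i)) (Σ i : Fin s, Fin (ν i)) (LaurentPolynomial K))) r j
        = (if r = j then 1 else 0)
          - T (-1) * (if r.1 = j.1 ∧ (r.2 : ℕ) + 1 = (j.2 : ℕ) then 1 else 0) := by
      intro r j
      simp [Matrix.sub_apply, Matrix.one_apply, Matrix.smul_apply, Matrix.map_apply, hZ,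
        smul_eq_mul, apply_ite (algebraMap K (LaurentPolynomial K))]
    have hbA : ∀ p j : (Σ i : Fin s, Fin (ν i)),
        (b.map Polynomial.toLaurent *
          (1 - (T (-1) : LaurentPolynomial K) • Z.map (algebraMap K (LaurentPolynomial K)) :
            Matrix (Σ i : Fin s, Fin (ν i)) (Σ i : Fin s, Fin (ν i)) (LaurentPolynomial K))) p j
        = (if p.1 = j.1 ∧ (j.2 : ℕ) = 0 then T ((p.2 : ℕ) : ℤ) else 0)
          + (if p.1 = j.1 ∧ (j.2 : ℕ) = (p.2 : ℕ) + 1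
              then -(T (-1) : LaurentPolynomial K) else 0) := by
      intro p j
      rw [Matrix.mul_apply]
      simp only [hAe, mul_sub]
      rw [Finset.sum_sub_distrib]
      have e1 : ∑ r : (Σ i : Fin s, Fin (ν i)),
          (b.map Polynomial.toLaurent) p r * (if r = j then 1 else 0)
          = (b.map Polynomial.toLaurent) p j := by
        simp [mul_ite]
      rw [e1]
      by_cases hj0 : (j.2 : ℕ) = 0
      · have e2 : ∑ r : (Σ i : Fin s, Fin (ν i)),
            (b.map Polynomial.toLaurent) p r *
              (T (-1) * (if r.1 = j.1 ∧ (r.2 : ℕ) + 1 = (j.2 : ℕ) then 1 else 0)) = 0 := by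
          apply Finset.sum_eq_zero
          intro r _
          rw [if_neg, mul_zero, mul_zero]
          rintro ⟨-, h2⟩
          omega
        rw [e2, sub_zero, Matrix.map_apply, hb]
        by_cases hp1 : p.1 = j.1
        · rw [if_pos ⟨hp1, by omega⟩, if_pos ⟨hp1, hj0⟩, if_neg (by omega), add_zero,
            Polynomial.toLaurent_X_pow]
          congr 1
          omega
        · rw [if_neg (by tauto), if_neg (by tauto), if_neg (by tauto)]
          simp
      · have hm : (j.2 : ℕ) - 1 < ν j.1 := by have := j.2.isLt; omega
        have e2 : ∑ r : (Σ i : Fin s, Fin (ν i)),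
            (b.map Polynomial.toLaurent) p r *
              (T (-1) * (if r.1 = j.1 ∧ (r.2 : ℕ) + 1 = (j.2 : ℕ) then 1 else 0))
            = Polynomial.toLaurent
                (if p.1 = j.1 ∧ (j.2 : ℕ) - 1 ≤ (p.2 : ℕ)
                  then Polynomial.X ^ ((p.2 : ℕ) - ((j.2 : ℕ) - 1)) else 0) * T (-1) := by
          rw [Fintype.sum_eq_single (⟨j.1, ⟨(j.2 : ℕ) - 1, hm⟩⟩ : (Σ i : Fin s, Fin (ν i)))]
          · rw [if_pos ⟨rfl, (by omega : ((j.2 : ℕ) - 1) + 1 = (j.2 : ℕ))⟩, mul_one,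
              Matrix.map_apply, hb]
          · intro r hr
            rw [if_neg, mul_zero, mul_zero]
            rintro ⟨h1, h2⟩
            exact hr (sigeq _ r h1 (by show (r.2 : ℕ) = (j.2 : ℕ) - 1; omega))
        rw [e2, Matrix.map_apply, hb]
        by_cases hp1 : p.1 = j.1
        · by_cases hle : (j.2 : ℕ) ≤ (p.2 : ℕ)
          · rw [if_pos ⟨hp1, hle⟩, if_pos ⟨hp1, by omega⟩, if_neg (by omega),
              if_neg (by omega), add_zero, Polynomial.toLaurent_X_pow,
              Polynomial.toLaurent_X_pow, ← T_add]
            rw [(by omega : ((p.2 : ℕ) - ((j.2 : ℕ) - 1) : ℕ) + (-1 : ℤ)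
                = (((p.2 : ℕ) - (j.2 : ℕ) : ℕ) : ℤ)), sub_self]
          · by_cases heq : (j.2 : ℕ) = (p.2 : ℕ) + 1
            · rw [if_neg (by omega), if_pos ⟨hp1, by omega⟩, if_neg (by omega),
                if_pos ⟨hp1, heq⟩, (by omega : (p.2 : ℕ) - ((j.2 : ℕ) - 1) = 0), pow_zero,
                _root_.map_one, one_mul, _root_.map_zero, zero_sub, zero_add]
            · rw [if_neg (by omega), if_neg (by omega), if_neg (by omega), if_neg (by omega)]
              simp
        · rw [if_neg (by tauto), if_neg (by tauto), if_neg (by tauto), if_neg (by tauto)]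
          simp
    refine Matrix.ext fun p q => ?_
    rw [Matrix.mul_apply]
    simp only [hbA, Matrix.map_apply, hc, Matrix.of_apply]
    by_cases hq0 : (q.2 : ℕ) = 0
    · by_cases hpq : p.1 = q.1
      · by_cases hlt2 : (p.2 : ℕ) + 1 < ν p.1
        · rw [Fintype.sum_eq_add (⟨p.1, ⟨0, hpos p.1⟩⟩ : (Σ i : Fin s, Fin (ν i)))
            (⟨p.1, ⟨(p.2 : ℕ) + 1, hlt2⟩⟩ : (Σ i : Fin s, Fin (ν i)))]
          · show ((if p.1 = p.1 ∧ (0 : ℕ) = 0 then (T ((p.2 : ℕ) : ℤ) : LaurentPolynomial K) else 0)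
                + (if p.1 = p.1 ∧ (0 : ℕ) = (p.2 : ℕ) + 1
                    then -(T (-1) : LaurentPolynomial K) else 0))
              * Polynomial.toLaurent (if p.1 = q.1 ∧ (q.2 : ℕ) = 0
                  then (Polynomial.X : Polynomial K) ^ (0 : ℕ)
                  else if (⟨p.1, ⟨0, hpos p.1⟩⟩ : (Σ i : Fin s, Fin (ν i))) = q then 1 else 0)
              + ((if p.1 = p.1 ∧ (p.2 : ℕ) + 1 = 0
                    then (T ((p.2 : ℕ) : ℤ) : LaurentPolynomial K) else 0)
                + (if p.1 = p.1 ∧ (p.2 : ℕ) + 1 = (p.2 : ℕ) + 1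
                    then -(T (-1) : LaurentPolynomial K) else 0))
              * Polynomial.toLaurent (if p.1 = q.1 ∧ (q.2 : ℕ) = 0
                  then (Polynomial.X : Polynomial K) ^ ((p.2 : ℕ) + 1)
                  else if (⟨p.1, ⟨(p.2 : ℕ) + 1, hlt2⟩⟩ : (Σ i : Fin s, Fin (ν i))) = q
                    then 1 else 0)
              = _
            have nA2 : ¬(p.1 = p.1 ∧ (0 : ℕ) = (p.2 : ℕ) + 1) := fun h => by omega
            have nB1 : ¬(p.1 = p.1 ∧ (p.2 : ℕ) + 1 = 0) := fun h => by omega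
            have nR1 : ¬((p.2 : ℕ) = ν p.1 - 1 ∧ (q.2 : ℕ) = 0) := fun h => by
              have := h.1; omega
            have nR2 : ¬((q.2 : ℕ) = (p.2 : ℕ) + 1) := by omega
            rw [if_pos ⟨rfl, rfl⟩, if_neg nA2, add_zero, if_pos ⟨hpq, hq0⟩,
              if_neg nB1, zero_add, if_pos ⟨rfl, rfl⟩, if_pos ⟨hpq, hq0⟩,
              Polynomial.toLaurent_X_pow, Polynomial.toLaurent_X_pow,
              if_pos hpq, if_neg nR1, if_neg nR2, add_zero]
            rw [← T_add, neg_mul, ← T_add]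
            rw [(by omega : ((p.2 : ℕ) : ℤ) + (((0 : ℕ) : ℤ))
              = (-1 : ℤ) + (((p.2 : ℕ) + 1 : ℕ) : ℤ))]
            ring
          · intro h
            have : ((0 : ℕ)) = (p.2 : ℕ) + 1 := by
              have := congrArg (fun r : (Σ i : Fin s, Fin (ν i)) => (r.2 : ℕ)) h
              simpa using this
            omega
          · rintro j ⟨hj1, hj2⟩
            have e3 : (if p.1 = j.1 ∧ (j.2 : ℕ) = 0
                then (T ((p.2 : ℕ) : ℤ) : LaurentPolynomial K) else 0) = 0 := by
              rw [if_neg]; rintro ⟨h1, h2⟩; exact hj1 (sigeq _ j h1.symm h2)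
            have e4 : (if p.1 = j.1 ∧ (j.2 : ℕ) = (p.2 : ℕ) + 1
                then -(T (-1) : LaurentPolynomial K) else 0) = 0 := by
              rw [if_neg]; rintro ⟨h1, h2⟩; exact hj2 (sigeq _ j h1.symm h2)
            rw [e3, e4, add_zero, zero_mul]
        · have hptop : (p.2 : ℕ) + 1 = ν p.1 := by have := p.2.isLt; omega
          rw [Fintype.sum_eq_single (⟨p.1, ⟨0, hpos p.1⟩⟩ : (Σ i : Fin s, Fin (ν i)))]
          · show ((if p.1 = p.1 ∧ (0 : ℕ) = 0 then (T ((p.2 : ℕ) : ℤ) : LaurentPolynomial K) else 0)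
                + (if p.1 = p.1 ∧ (0 : ℕ) = (p.2 : ℕ) + 1
                    then -(T (-1) : LaurentPolynomial K) else 0))
              * Polynomial.toLaurent (if p.1 = q.1 ∧ (q.2 : ℕ) = 0
                  then (Polynomial.X : Polynomial K) ^ (0 : ℕ)
                  else if (⟨p.1, ⟨0, hpos p.1⟩⟩ : (Σ i : Fin s, Fin (ν i))) = q then 1 else 0)
              = _
            have nA2 : ¬(p.1 = p.1 ∧ (0 : ℕ) = (p.2 : ℕ) + 1) := fun h => by omega
            have nR2 : ¬((q.2 : ℕ) = (p.2 : ℕ) + 1) := by omega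
            rw [if_pos ⟨rfl, rfl⟩, if_neg nA2, add_zero, if_pos ⟨hpq, hq0⟩,
              Polynomial.toLaurent_X_pow,
              if_pos hpq, if_pos ⟨(by omega : (p.2 : ℕ) = ν p.1 - 1), hq0⟩,
              if_neg nR2, add_zero, ← T_add]
            congr 1
            omega
          · intro j hj
            have e3 : (if p.1 = j.1 ∧ (j.2 : ℕ) = 0
                then (T ((p.2 : ℕ) : ℤ) : LaurentPolynomial K) else 0) = 0 := by
              rw [if_neg]; rintro ⟨h1, h2⟩; exact hj (sigeq _ j h1.symm h2)
            have e4 : (if p.1 = j.1 ∧ (j.2 : ℕ) = (p.2 : ℕ) + 1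
                then -(T (-1) : LaurentPolynomial K) else 0) = 0 := by
              rw [if_neg]
              rintro ⟨h1, h2⟩
              have h3 : ν j.1 = ν p.1 := by rw [h1]
              have := j.2.isLt
              omega
            rw [e3, e4, add_zero, zero_mul]
      · rw [Finset.sum_eq_zero, if_neg hpq]
        intro j _
        by_cases hj1 : j.1 = q.1
        · have e3 : (if p.1 = j.1 ∧ (j.2 : ℕ) = 0
              then (T ((p.2 : ℕ) : ℤ) : LaurentPolynomial K) else 0) = 0 := by
            rw [if_neg]; rintro ⟨h1, -⟩; exact hpq (h1.trans hj1)
          have e4 : (if p.1 = j.1 ∧ (j.2 : ℕ) = (p.2 : ℕ) + 1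
              then -(T (-1) : LaurentPolynomial K) else 0) = 0 := by
            rw [if_neg]; rintro ⟨h1, -⟩; exact hpq (h1.trans hj1)
          rw [e3, e4, add_zero, zero_mul]
        · rw [if_neg (fun h : j.1 = q.1 ∧ (q.2 : ℕ) = 0 => hj1 h.1),
            if_neg (fun h : j = q => hj1 (congrArg Sigma.fst h)),
            _root_.map_zero, mul_zero]
    · rw [Fintype.sum_eq_single q]
      · have e3 : (if q.1 = q.1 ∧ (q.2 : ℕ) = 0
            then (Polynomial.X : Polynomial K) ^ ((q.2 : ℕ))
            else if q = q then 1 else 0) = 1 := by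
          rw [if_neg (fun h => hq0 h.2), if_pos rfl]
        rw [e3, _root_.map_one, mul_one,
          if_neg (fun h : p.1 = q.1 ∧ (q.2 : ℕ) = 0 => hq0 h.2), zero_add]
        by_cases hpq : p.1 = q.1
        · rw [if_pos hpq,
            if_neg (fun h : (p.2 : ℕ) = ν p.1 - 1 ∧ (q.2 : ℕ) = 0 => hq0 h.2), zero_add]
          by_cases h2 : (q.2 : ℕ) = (p.2 : ℕ) + 1
          · rw [if_pos ⟨hpq, h2⟩, if_pos h2]
          · rw [if_neg (fun h => h2 h.2), if_neg h2]
        · rw [if_neg (fun h : p.1 = q.1 ∧ (q.2 : ℕ) = (p.2 : ℕ) + 1 => hpq h.1), if_neg hpq]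
      · intro j hj
        have e3 : (if j.1 = q.1 ∧ (q.2 : ℕ) = 0
            then (Polynomial.X : Polynomial K) ^ ((j.2 : ℕ))
            else if j = q then 1 else 0) = 0 := by
          rw [if_neg (fun h => hq0 h.2), if_neg hj]
        rw [e3, _root_.map_zero, mul_zero]
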